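/- arXiv:1908.06227 — 2 statements merged into one kernel-verified Lean document; each statement's English description precedes it below -/
import Mathlib

section
/- Let G be a group acting freely by orientation-preserving homeomorphisms on ℝ. Then G admits an Archimedean left-invariant linear order, and hence G embeds in (ℝ, +) as an ordered group; in particular G is torsion-free and abelian. -/
section Dyn
variable {G : Type*} [Group G] [MulAction G ℝ]

lemma dyn_pos_all (hcont : ∀ g : G, Continuous fun x : ℝ => g • x)
    (hfree : ∀ g : G, g ≠ 1 → ∀ x : ℝ, g • x ≠ x)
    {g : G} (hg : 0 < g • (0:ℝ)) : ∀ x : ℝ, x < g • x := by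
  have hg1 : g ≠ 1 := by rintro rfl; simp at hg
  intro x
  by_contra hx
  push_neg at hx
  have hx' : g • x < x := lt_of_le_of_ne hx (hfree g hg1 x)
  have hc : Continuous fun y : ℝ => g • y - y := (hcont g).sub continuous_id
  have h0 : (0:ℝ) ∈ Set.Icc (g • x - x) (g • (0:ℝ) - 0) := by
    constructor <;> simp [le_of_lt hx', le_of_lt hg]
  obtain ⟨c, hc0⟩ := intermediate_value_univ x 0 hc h0
  simp only [] at hc0; exact hfree g hg1 c (by linarith)

lemma dyn_lt_all (hcont : ∀ g : G, Continuous fun x : ℝ => g • x)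
    (hmono : ∀ g : G, StrictMono fun x : ℝ => g • x)
    (hfree : ∀ g : G, g ≠ 1 → ∀ x : ℝ, g • x ≠ x)
    {g h : G} (hgh : g • (0:ℝ) < h • (0:ℝ)) : ∀ x : ℝ, g • x < h • x := by
  intro x
  have h0 : 0 < (g⁻¹ * h) • (0:ℝ) := by
    have := hmono g⁻¹ hgh
    simpa [mul_smul] using this
  have := dyn_pos_all hcont hfree h0 x
  have := hmono g this
  simpa [mul_smul] using this

lemma dyn_inj (hfree : ∀ g : G, g ≠ 1 → ∀ x : ℝ, g • x ≠ x) {g h : G}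
    (hgh : g • (0:ℝ) = h • (0:ℝ)) : g = h := by
  by_contra hne
  have h1 : h⁻¹ * g ≠ 1 := by
    simp [inv_mul_eq_one]; exact fun e => hne (e.symm ▸ rfl)
  exact hfree _ h1 0 (by rw [mul_smul, hgh, inv_smul_smul])

lemma dyn_le_all (hcont : ∀ g : G, Continuous fun x : ℝ => g • x)
    (hmono : ∀ g : G, StrictMono fun x : ℝ => g • x)
    (hfree : ∀ g : G, g ≠ 1 → ∀ x : ℝ, g • x ≠ x)
    {g h : G} (hgh : g • (0:ℝ) ≤ h • (0:ℝ)) : ∀ x : ℝ, g • x ≤ h • x := by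
  rcases eq_or_lt_of_le hgh with he | hl
  · intro x; rw [dyn_inj hfree he]
  · exact fun x => le_of_lt (dyn_lt_all hcont hmono hfree hl x)

lemma dyn_arch (hcont : ∀ g : G, Continuous fun x : ℝ => g • x)
    (hmono : ∀ g : G, StrictMono fun x : ℝ => g • x)
    (hfree : ∀ g : G, g ≠ 1 → ∀ x : ℝ, g • x ≠ x)
    {g : G} (hg : 0 < g • (0:ℝ)) (x₀ b : ℝ) : ∃ n : ℕ, b < g ^ n • x₀ := by
  set a : ℕ → ℝ := fun n => g ^ n • x₀ with ha
  have hstep : ∀ n, a n < a (n + 1) := by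
    intro n
    have := dyn_pos_all hcont hfree hg (a n)
    simpa [ha, pow_succ', mul_smul] using this
  have hmon : Monotone a := monotone_nat_of_le_succ fun n => (hstep n).le
  by_contra hb
  push_neg at hb
  have hbdd : BddAbove (Set.range a) := ⟨b, by rintro y ⟨n, rfl⟩; exact hb n⟩
  set L := ⨆ n, a n with hL
  have htend : Filter.Tendsto a Filter.atTop (nhds L) := tendsto_atTop_ciSup hmon hbdd
  have htend2 : Filter.Tendsto (fun n => a (n + 1)) Filter.atTop (nhds L) :=
    htend.comp (Filter.tendsto_add_atTop_nat 1)
  have htend3 : Filter.Tendsto (fun n => g • a n) Filter.atTop (nhds (g • L)) :=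
    ((hcont g).tendsto L).comp htend
  have heq : ∀ n, g • a n = a (n + 1) := by
    intro n; simp [ha, pow_succ', mul_smul]
  have : g • L = L := tendsto_nhds_unique (by simpa [heq] using htend3) htend2
  exact absurd this (ne_of_gt (dyn_pos_all hcont hfree hg L))

end Dyn


lemma lin_bound_zero {L c : ℝ} (hc : ∀ n : ℕ, 0 < n → (n : ℝ) * |L| ≤ c) : L = 0 := by
  by_contra hL
  have hL' : 0 < |L| := abs_pos.mpr hL
  obtain ⟨n, hn⟩ := exists_nat_gt (c / |L|)
  have hc1 : |L| ≤ c := by simpa using hc 1 one_pos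
  have hn0 : 0 < n := by
    by_contra h0
    push_neg at h0
    interval_cases n
    simp at hn
    have := div_pos (lt_of_lt_of_le hL' hc1) hL'
    linarith
  have h2 : c < n * |L| := by
    rw [div_lt_iff₀ hL'] at hn
    linarith [hn]
  exact absurd (hc n hn0) (not_le.mpr h2)

lemma qm_eq_of_bounds (x : ℕ → ℝ) (L L' c c' : ℝ)
    (h1 : ∀ n : ℕ, 0 < n → |x n - n * L| ≤ c)
    (h2 : ∀ n : ℕ, 0 < n → |x n - n * L'| ≤ c') : L = L' := by
  have key : ∀ n : ℕ, 0 < n → (n : ℝ) * |L - L'| ≤ c + c' := by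
    intro n hn
    have : (n:ℝ) * |L - L'| = |(x n - n * L') - (x n - n * L)| := by
      rw [show (x n - n * L') - (x n - n * L) = n * L - n * L' by ring, ← mul_sub,
        abs_mul, Nat.abs_cast]
    rw [this]
    calc |(x n - n * L') - (x n - n * L)| ≤ |x n - n * L'| + |x n - n * L| := abs_sub _ _
      _ ≤ c' + c := add_le_add (h2 n hn) (h1 n hn)
      _ = c + c' := by ring
  have := lin_bound_zero key
  linarith [this, abs_nonneg (L - L'), sub_eq_zero.mp this]

lemma qm_exists (b : ℕ → ℝ) (hb : ∀ m n : ℕ, |b (m + n) - b m - b n| ≤ 1) :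
    ∃ L : ℝ, ∀ n : ℕ, 0 < n → |b n - n * L| ≤ 1 := by
  have claim1 : ∀ m n : ℕ, 0 < m → |b (m * n) - m * b n| ≤ (m : ℝ) - 1 := by
    intro m
    induction m with
    | zero => intro n h; exact absurd h (lt_irrefl 0)
    | succ k ih =>
      intro n _
      rcases Nat.eq_zero_or_pos k with hk | hk
      · subst hk; simp
      · have h1 := ih n hk
        have h2 := hb (k * n) n
        have he : (k + 1) * n = k * n + n := by ring
        rw [he]
        push_cast
        have : |b (k * n + n) - (k + 1 : ℝ) * b n|
            ≤ |b (k * n + n) - b (k * n) - b n| + |b (k * n) - k * b n| := by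
          have : b (k * n + n) - (k + 1 : ℝ) * b n
              = (b (k * n + n) - b (k * n) - b n) + (b (k * n) - k * b n) := by ring
          rw [this]; exact abs_add_le _ _
        calc |b (k * n + n) - (k + 1 : ℝ) * b n| ≤ _ + _ := this
          _ ≤ 1 + ((k : ℝ) - 1) := add_le_add h2 h1
          _ = (k : ℝ) + 1 - 1 := by ring
  set u : ℕ → ℝ := fun n => b n / n with hu
  have hud : ∀ m n : ℕ, 0 < m → 0 < n → |u m - u n| ≤ 1 / m + 1 / n := by
    intro m n hm hn
    have h1 := claim1 m n hm
    have h2 := claim1 n m hn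
    rw [Nat.mul_comm n m] at h2
    have hmr : (0:ℝ) < m := Nat.cast_pos.mpr hm
    have hnr : (0:ℝ) < n := Nat.cast_pos.mpr hn
    have key : |(n:ℝ) * b m - m * b n| ≤ (m:ℝ) + n - 2 := by
      have : (n:ℝ) * b m - m * b n
          = (b (m * n) - m * b n) - (b (m * n) - n * b m) := by ring
      rw [this]
      calc |(b (m * n) - (m:ℝ) * b n) - (b (m * n) - n * b m)|
          ≤ |b (m * n) - (m:ℝ) * b n| + |b (m * n) - (n:ℝ) * b m| := abs_sub _ _
        _ ≤ ((m:ℝ) - 1) + ((n:ℝ) - 1) := add_le_add h1 h2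
        _ = (m:ℝ) + n - 2 := by ring
    have heq : u m - u n = ((n:ℝ) * b m - m * b n) / (m * n) := by
      rw [hu]; dsimp only; rw [div_sub_div _ _ hmr.ne' hnr.ne']
      ring
    rw [heq, abs_div]
    rw [abs_of_pos (by positivity : (0:ℝ) < (m:ℝ) * n)]
    rw [div_le_iff₀ (by positivity)]
    calc |(n:ℝ) * b m - m * b n| ≤ (m:ℝ) + n - 2 := key
      _ ≤ (1 / m + 1 / n) * (m * n) := by
          field_simp
          nlinarith [hmr, hnr]
  -- Cauchy sequence
  have hcauchy : CauchySeq (fun n => u (n + 1)) := by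
    refine cauchySeq_of_le_tendsto_0 (fun N => 2 / ((N : ℝ) + 1)) ?_ ?_
    · intro n m N hn hm
      have h := hud (n + 1) (m + 1) (Nat.succ_pos n) (Nat.succ_pos m)
      rw [Real.dist_eq]
      have h1 : 1 / ((n:ℝ) + 1) ≤ 1 / ((N:ℝ) + 1) := by
        apply one_div_le_one_div_of_le (by positivity)
        exact_mod_cast Nat.add_le_add_right hn 1
      have h2 : 1 / ((m:ℝ) + 1) ≤ 1 / ((N:ℝ) + 1) := by
        apply one_div_le_one_div_of_le (by positivity)
        exact_mod_cast Nat.add_le_add_right hm 1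
      push_cast at h
      calc |u (n+1) - u (m+1)| ≤ 1 / ((n:ℝ)+1) + 1 / ((m:ℝ)+1) := h
        _ ≤ 1 / ((N:ℝ)+1) + 1 / ((N:ℝ)+1) := add_le_add h1 h2
        _ = 2 / ((N:ℝ)+1) := by ring
    · have : Filter.Tendsto (fun N : ℕ => 2 / ((N:ℝ) + 1)) Filter.atTop (nhds 0) := by
        apply Filter.Tendsto.div_atTop (tendsto_const_nhds)
        exact Filter.tendsto_atTop_add_const_right _ 1 tendsto_natCast_atTop_atTop
      exact this
  obtain ⟨L, hL⟩ := cauchySeq_tendsto_of_complete hcauchy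
  refine ⟨L, fun n hn => ?_⟩
  have hun : |u n - L| ≤ 1 / n := by
    have htend1 : Filter.Tendsto (fun m : ℕ => |u n - u (m + 1)|) Filter.atTop
        (nhds |u n - L|) := ((tendsto_const_nhds.sub hL).abs)
    have htend2 : Filter.Tendsto (fun m : ℕ => 1 / (n:ℝ) + 1 / ((m:ℝ) + 1)) Filter.atTop
        (nhds (1 / n + 0)) := by
      apply Filter.Tendsto.add tendsto_const_nhds
      apply Filter.Tendsto.div_atTop (tendsto_const_nhds)
      exact Filter.tendsto_atTop_add_const_right _ 1 tendsto_natCast_atTop_atTop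
    rw [add_zero] at htend2
    refine le_of_tendsto_of_tendsto' htend1 htend2 fun m => ?_
    have := hud n (m + 1) hn (Nat.succ_pos m)
    push_cast at this ⊢
    exact this
  have hnr : (0:ℝ) < n := Nat.cast_pos.mpr hn
  have : b n = n * u n := by have := hnr.ne'; rw [hu]; dsimp only; field_simp
  rw [this, ← mul_sub, abs_mul, Nat.abs_cast]
  calc (n:ℝ) * |u n - L| ≤ n * (1 / n) := by
        exact mul_le_mul_of_nonneg_left hun (le_of_lt hnr)
    _ = 1 := by field_simp

lemma holder {G : Type*} [Group G] [MulAction G ℝ]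
    (hcont : ∀ g : G, Continuous fun x : ℝ => g • x)
    (hmono : ∀ g : G, StrictMono fun x : ℝ => g • x)
    (hfree : ∀ g : G, g ≠ 1 → ∀ x : ℝ, g • x ≠ x)
    (f : G) (hf : 0 < f • (0:ℝ)) :
    ∃ Φ : G → ℝ, (∀ a b : G, Φ (a * b) = Φ a + Φ b) ∧ (∀ g : G, g ≠ 1 → Φ g ≠ 0) := by
  classical
  -- basic order lemmas
  have hmul_lt_left : ∀ c a b : G, a • (0:ℝ) < b • (0:ℝ) → (c * a) • (0:ℝ) < (c * b) • (0:ℝ) := by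
    intro c a b h; simpa [mul_smul] using hmono c h
  have hmul_le_left : ∀ c a b : G, a • (0:ℝ) ≤ b • (0:ℝ) → (c * a) • (0:ℝ) ≤ (c * b) • (0:ℝ) := by
    intro c a b h; simpa [mul_smul] using (hmono c).monotone h
  have hmul_le_right : ∀ c a b : G, a • (0:ℝ) ≤ b • (0:ℝ) → (a * c) • (0:ℝ) ≤ (b * c) • (0:ℝ) := by
    intro c a b h
    simpa [mul_smul] using dyn_le_all hcont hmono hfree h (c • (0:ℝ))
  have hmul_lt_right : ∀ c a b : G, a • (0:ℝ) < b • (0:ℝ) → (a * c) • (0:ℝ) < (b * c) • (0:ℝ) := by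
    intro c a b h
    simpa [mul_smul] using dyn_lt_all hcont hmono hfree h (c • (0:ℝ))
  set F : ℤ → ℝ := fun m => (f ^ m) • (0:ℝ) with hFdef
  have hF : StrictMono F := by
    apply strictMono_int_of_lt_succ
    intro m
    have h := hmono (f ^ m) hf
    simpa [hFdef, zpow_add_one, mul_smul] using h
  have hFadd : ∀ m n : ℤ, F (m + n) = (f ^ m * f ^ n) • (0:ℝ) := by
    intro m n; simp [hFdef, zpow_add]
  have hFnat : ∀ n : ℕ, F (n : ℤ) = (f ^ n) • (0:ℝ) := by
    intro n; simp [hFdef, zpow_natCast]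
  -- existence of the integer part
  have hq_ex : ∀ h : G, ∃ m : ℤ, F m ≤ h • (0:ℝ) ∧ h • (0:ℝ) < F (m + 1) := by
    intro h
    obtain ⟨n₁, hn₁⟩ := dyn_arch hcont hmono hfree hf (h • (0:ℝ)) 0
    obtain ⟨n₂, hn₂⟩ := dyn_arch hcont hmono hfree hf 0 (h • (0:ℝ))
    have hlow : F (-(n₁ : ℤ)) ≤ h • (0:ℝ) := by
      have h2 := hmono (f ^ n₁)⁻¹ hn₁
      simp only [] at h2
      rw [inv_smul_smul] at h2
      have h4 : F (-(n₁ : ℤ)) = (f ^ n₁)⁻¹ • (0:ℝ) := by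
        simp [hFdef, zpow_neg, zpow_natCast]
      rw [h4]; exact le_of_lt h2
    have hbdd : ∀ m : ℤ, F m ≤ h • (0:ℝ) → m ≤ n₂ := by
      intro m hm
      have : F m < F (n₂ : ℤ) := lt_of_le_of_lt hm (by rw [hFnat]; exact hn₂)
      exact le_of_lt (hF.lt_iff_lt.mp this)
    obtain ⟨m, hm, hmax⟩ := Int.exists_greatest_of_bdd (P := fun m => F m ≤ h • (0:ℝ))
      ⟨n₂, fun z hz => hbdd z hz⟩ ⟨-(n₁ : ℤ), hlow⟩
    refine ⟨m, hm, ?_⟩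
    by_contra hc
    push_neg at hc
    have := hmax (m + 1) hc
    omega
  choose q hq1 hq2 using hq_ex
  have hq_eq : ∀ (h : G) (m : ℤ), F m ≤ h • (0:ℝ) → h • (0:ℝ) < F (m + 1) → q h = m := by
    intro h m h1 h2
    have a1 : q h < m + 1 := hF.lt_iff_lt.mp (lt_of_le_of_lt (hq1 h) h2)
    have a2 : m < q h + 1 := hF.lt_iff_lt.mp (lt_of_le_of_lt h1 (hq2 h))
    omega
  have hq_mono : ∀ a b : G, a • (0:ℝ) ≤ b • (0:ℝ) → q a ≤ q b := by
    intro a b h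
    have : F (q a) < F (q b + 1) := lt_of_le_of_lt (le_trans (hq1 a) h) (hq2 b)
    have := hF.lt_iff_lt.mp this
    omega
  have hq_prod_low : ∀ a b : G, q a + q b ≤ q (a * b) := by
    intro a b
    have h1 : F (q a + q b) ≤ (a * b) • (0:ℝ) := by
      rw [hFadd]
      calc (f ^ q a * f ^ q b) • (0:ℝ) ≤ (f ^ q a * b) • (0:ℝ) :=
            hmul_le_left _ _ _ (hq1 b)
        _ ≤ (a * b) • (0:ℝ) := hmul_le_right _ _ _ (hq1 a)
    have : F (q a + q b) < F (q (a * b) + 1) := lt_of_le_of_lt h1 (hq2 _)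
    have := hF.lt_iff_lt.mp this
    omega
  have hq_prod_high : ∀ a b : G, q (a * b) ≤ q a + q b + 1 := by
    intro a b
    have h1 : (a * b) • (0:ℝ) < F (q a + q b + 2) := by
      rw [show q a + q b + 2 = (q a + 1) + (q b + 1) by ring, hFadd]
      calc (a * b) • (0:ℝ) < (a * f ^ (q b + 1)) • (0:ℝ) := hmul_lt_left _ _ _ (hq2 b)
        _ ≤ (f ^ (q a + 1) * f ^ (q b + 1)) • (0:ℝ) := hmul_le_right _ _ _ (le_of_lt (hq2 a))
    have : F (q (a * b)) < F (q a + q b + 2) := lt_of_le_of_lt (hq1 _) h1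
    have := hF.lt_iff_lt.mp this
    omega
  have hpow_le : ∀ a b : G, a • (0:ℝ) ≤ b • (0:ℝ) → ∀ n : ℕ, (a ^ n) • (0:ℝ) ≤ (b ^ n) • (0:ℝ) := by
    intro a b h n
    induction n with
    | zero => simp
    | succ k ih =>
      calc (a ^ (k + 1)) • (0:ℝ) = (a * a ^ k) • (0:ℝ) := by rw [pow_succ']
        _ ≤ (a * b ^ k) • (0:ℝ) := hmul_le_left _ _ _ ih
        _ ≤ (b * b ^ k) • (0:ℝ) := hmul_le_right _ _ _ h
        _ = (b ^ (k + 1)) • (0:ℝ) := by rw [pow_succ']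
  have hq_qf : ∀ n : ℕ, q (f ^ n) = (n : ℤ) := by
    intro n
    refine hq_eq _ _ (le_of_eq (hFnat n)) ?_
    calc (f ^ n) • (0:ℝ) = F (n : ℤ) := (hFnat n).symm
      _ < F ((n : ℤ) + 1) := hF (lt_add_one _)
  have hquasi : ∀ g : G, ∀ m n : ℕ,
      |(q (g ^ (m + n)) : ℝ) - (q (g ^ m) : ℝ) - (q (g ^ n) : ℝ)| ≤ 1 := by
    intro g m n
    have l1 := hq_prod_low (g ^ m) (g ^ n)
    have l2 := hq_prod_high (g ^ m) (g ^ n)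
    rw [← pow_add] at l1 l2
    rw [abs_le]
    constructor
    · have : (-1 : ℤ) ≤ q (g ^ (m + n)) - q (g ^ m) - q (g ^ n) := by omega
      exact_mod_cast this
    · have : q (g ^ (m + n)) - q (g ^ m) - q (g ^ n) ≤ (1 : ℤ) := by omega
      exact_mod_cast this
  -- the translation number
  set Φ : G → ℝ := fun g => Classical.choose (qm_exists (fun n => (q (g ^ n) : ℝ)) (hquasi g))
    with hΦdef
  have hΦ : ∀ g : G, ∀ n : ℕ, 0 < n → |(q (g ^ n) : ℝ) - n * Φ g| ≤ 1 := fun g =>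
    Classical.choose_spec (qm_exists (fun n => (q (g ^ n) : ℝ)) (hquasi g))
  have hΦ_unique : ∀ (g : G) (L c : ℝ),
      (∀ n : ℕ, 0 < n → |(q (g ^ n) : ℝ) - n * L| ≤ c) → Φ g = L := by
    intro g L c h
    exact qm_eq_of_bounds (fun n => (q (g ^ n) : ℝ)) (Φ g) L 1 c (hΦ g) h
  have hq_one : q 1 = 0 := by
    refine hq_eq 1 0 (le_of_eq ?_) ?_
    · simp [hFdef]
    · have h01 : F 0 < F 1 := hF zero_lt_one
      have hF0 : F 0 = (1:G) • (0:ℝ) := by simp [hFdef]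
      rw [← hF0]
      exact h01
  have hΦ_one : Φ 1 = 0 := by
    apply hΦ_unique 1 0 1
    intro n hn
    simp [one_pow, hq_one]
  -- additivity
  have hΦ_add : ∀ g h : G, Φ (g * h) = Φ g + Φ h := by
    intro g h
    have hkey : ∃ D : ℝ, ∀ n : ℕ, 0 < n →
        |(q ((g * h) ^ n) : ℝ) - (q (g ^ n) : ℝ) - (q (h ^ n) : ℝ)| ≤ D := by
      have ineq : ∀ a b : G, (b * a) • (0:ℝ) ≤ (a * b) • (0:ℝ) → ∀ n : ℕ,
          ((a * b) ^ n) • (0:ℝ) ≤ (a ^ n * b ^ n) • (0:ℝ) ∧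
          (b ^ n * a ^ n) • (0:ℝ) ≤ ((a * b) ^ n) • (0:ℝ) := by
        intro a b hab
        have aux : ∀ n : ℕ, (b ^ n * a) • (0:ℝ) ≤ (a * b ^ n) • (0:ℝ) := by
          intro n
          induction n with
          | zero => simp
          | succ k ih =>
            calc (b ^ (k + 1) * a) • (0:ℝ) = (b * (b ^ k * a)) • (0:ℝ) := by
                  rw [pow_succ', mul_assoc]
              _ ≤ (b * (a * b ^ k)) • (0:ℝ) := hmul_le_left _ _ _ ih
              _ = ((b * a) * b ^ k) • (0:ℝ) := by rw [mul_assoc]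
              _ ≤ ((a * b) * b ^ k) • (0:ℝ) := hmul_le_right _ _ _ hab
              _ = (a * b ^ (k + 1)) • (0:ℝ) := by rw [pow_succ', mul_assoc]
        intro n
        induction n with
        | zero => simp
        | succ k ih =>
          obtain ⟨ih1, ih2⟩ := ih
          constructor
          · calc ((a * b) ^ (k + 1)) • (0:ℝ) = ((a * b) ^ k * (a * b)) • (0:ℝ) := by
                  rw [pow_succ]
              _ ≤ ((a ^ k * b ^ k) * (a * b)) • (0:ℝ) := hmul_le_right _ _ _ ih1
              _ = ((a ^ k * (b ^ k * a)) * b) • (0:ℝ) := by congr 1; group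
              _ ≤ ((a ^ k * (a * b ^ k)) * b) • (0:ℝ) := by
                  refine hmul_le_right _ _ _ (hmul_le_left _ _ _ (aux k))
              _ = (a ^ (k + 1) * b ^ (k + 1)) • (0:ℝ) := by
                  congr 1; rw [pow_succ a, pow_succ' b]; group
          · calc (b ^ (k + 1) * a ^ (k + 1)) • (0:ℝ)
                = ((b ^ (k + 1) * a) * a ^ k) • (0:ℝ) := by
                  congr 1; rw [pow_succ' a]; group
              _ ≤ ((a * b ^ (k + 1)) * a ^ k) • (0:ℝ) := hmul_le_right _ _ _ (aux (k + 1))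
              _ = ((a * b) * (b ^ k * a ^ k)) • (0:ℝ) := by
                  congr 1; rw [pow_succ' b]; group
              _ ≤ ((a * b) * (a * b) ^ k) • (0:ℝ) := hmul_le_left _ _ _ ih2
              _ = ((a * b) ^ (k + 1)) • (0:ℝ) := by rw [pow_succ']
      rcases le_total ((h * g) • (0:ℝ)) ((g * h) • (0:ℝ)) with hc | hc
      · refine ⟨1, fun n hn => ?_⟩
        obtain ⟨i1, i2⟩ := ineq g h hc n
        have u1 : q ((g * h) ^ n) ≤ q (g ^ n) + q (h ^ n) + 1 :=
          le_trans (hq_mono _ _ i1) (hq_prod_high _ _)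
        have u2 : q (h ^ n) + q (g ^ n) ≤ q ((g * h) ^ n) :=
          le_trans (hq_prod_low _ _) (hq_mono _ _ i2)
        rw [abs_le]
        constructor
        · have : (-1 : ℤ) ≤ q ((g * h) ^ n) - q (g ^ n) - q (h ^ n) := by omega
          exact_mod_cast this
        · have : q ((g * h) ^ n) - q (g ^ n) - q (h ^ n) ≤ (1 : ℤ) := by omega
          exact_mod_cast this
      · refine ⟨|(q g : ℝ) + (q g⁻¹ : ℝ)| + 3, fun n hn => ?_⟩
        obtain ⟨i1, i2⟩ := ineq h g hc n
        have u1 : q ((h * g) ^ n) ≤ q (h ^ n) + q (g ^ n) + 1 :=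
          le_trans (hq_mono _ _ i1) (hq_prod_high _ _)
        have u2 : q (g ^ n) + q (h ^ n) ≤ q ((h * g) ^ n) :=
          le_trans (hq_prod_low _ _) (hq_mono _ _ i2)
        have hconj : (g * h) ^ n = g * ((h * g) ^ n * g⁻¹) := by
          have hsemi : SemiconjBy g (h * g) (g * h) := (mul_assoc g h g).symm
          have hpow := hsemi.pow_right n
          rw [← mul_assoc]
          exact eq_mul_inv_iff_mul_eq.mpr hpow.symm
        have c1 : q ((g * h) ^ n) ≤ q g + (q ((h * g) ^ n) + q g⁻¹ + 1) + 1 := by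
          rw [hconj]
          exact le_trans (hq_prod_high _ _) (by
            have := hq_prod_high ((h * g) ^ n) g⁻¹
            omega)
        have c2 : q g + (q ((h * g) ^ n) + q g⁻¹) ≤ q ((g * h) ^ n) := by
          rw [hconj]
          exact le_trans (by
            have := hq_prod_low ((h * g) ^ n) g⁻¹
            omega) (hq_prod_low _ _)
        have hb1 : q ((g * h) ^ n) - q (g ^ n) - q (h ^ n) ≤ q g + q g⁻¹ + 3 := by omega
        have hb2 : q g + q g⁻¹ - 1 ≤ q ((g * h) ^ n) - q (g ^ n) - q (h ^ n) := by omega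
        have habs : |(q ((g * h) ^ n) : ℝ) - (q (g ^ n) : ℝ) - (q (h ^ n) : ℝ)
            - ((q g : ℝ) + (q g⁻¹ : ℝ))| ≤ 3 := by
          rw [abs_le]
          constructor
          · have : (-3 : ℤ) ≤ q ((g * h) ^ n) - q (g ^ n) - q (h ^ n) - (q g + q g⁻¹) := by omega
            exact_mod_cast this
          · have : q ((g * h) ^ n) - q (g ^ n) - q (h ^ n) - (q g + q g⁻¹) ≤ (3 : ℤ) := by omega
            exact_mod_cast this
        calc |(q ((g * h) ^ n) : ℝ) - (q (g ^ n) : ℝ) - (q (h ^ n) : ℝ)|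
            ≤ |(q ((g * h) ^ n) : ℝ) - (q (g ^ n) : ℝ) - (q (h ^ n) : ℝ)
              - ((q g : ℝ) + (q g⁻¹ : ℝ))| + |(q g : ℝ) + (q g⁻¹ : ℝ)| := by
              have := abs_add_le ((q ((g * h) ^ n) : ℝ) - (q (g ^ n) : ℝ) - (q (h ^ n) : ℝ)
                - ((q g : ℝ) + (q g⁻¹ : ℝ))) ((q g : ℝ) + (q g⁻¹ : ℝ))
              simpa using this
          _ ≤ |(q g : ℝ) + (q g⁻¹ : ℝ)| + 3 := by linarith [habs]
    obtain ⟨D, hD⟩ := hkey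
    apply hΦ_unique (g * h) (Φ g + Φ h) (D + 1 + 1)
    intro n hn
    have b1 := hΦ g n hn
    have b2 := hΦ h n hn
    have b3 := hD n hn
    have hsplit : (q ((g * h) ^ n) : ℝ) - n * (Φ g + Φ h)
        = ((q ((g * h) ^ n) : ℝ) - (q (g ^ n) : ℝ) - (q (h ^ n) : ℝ))
          + ((q (g ^ n) : ℝ) - n * Φ g) + ((q (h ^ n) : ℝ) - n * Φ h) := by ring
    rw [hsplit]
    calc |_ + _ + _| ≤ |_ + _| + |(q (h ^ n) : ℝ) - n * Φ h| := abs_add_le _ _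
      _ ≤ (|(q ((g * h) ^ n) : ℝ) - (q (g ^ n) : ℝ) - (q (h ^ n) : ℝ)|
          + |(q (g ^ n) : ℝ) - n * Φ g|) + |(q (h ^ n) : ℝ) - n * Φ h| := by
          gcongr
          exact abs_add_le _ _
      _ ≤ D + 1 + 1 := by linarith
  -- powers
  have hΦ_pow : ∀ (g : G) (n : ℕ), Φ (g ^ n) = n * Φ g := by
    intro g n
    induction n with
    | zero => simpa using hΦ_one
    | succ k ih =>
      rw [pow_succ, hΦ_add, ih]
      push_cast
      ring
  -- positivity
  have hΦ_pos : ∀ g : G, 0 < g • (0:ℝ) → 0 < Φ g := by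
    intro g hg
    obtain ⟨k, hk⟩ := dyn_arch hcont hmono hfree hg 0 (f • (0:ℝ))
    have hk0 : 0 < k := by
      rcases Nat.eq_zero_or_pos k with h0 | h0
      · subst h0; simp at hk; linarith
      · exact h0
    have hfg : (f : G) • (0:ℝ) ≤ (g ^ k) • (0:ℝ) := le_of_lt hk
    have hq_lower : ∀ n : ℕ, (n : ℤ) ≤ q ((g ^ k) ^ n) := by
      intro n
      have := hq_mono (f ^ n) ((g ^ k) ^ n) (hpow_le f (g ^ k) hfg n)
      rw [hq_qf n] at this
      exact this
    have h2 := hΦ (g ^ k) 2 (by norm_num)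
    have hl := hq_lower 2
    have hcast : (2 : ℝ) ≤ (q ((g ^ k) ^ 2) : ℝ) := by exact_mod_cast hl
    have : (1 : ℝ) ≤ 2 * Φ (g ^ k) := by
      rw [abs_le] at h2
      push_cast at h2
      linarith [h2.1, h2.2]
    have hgk : 0 < Φ (g ^ k) := by linarith
    rw [hΦ_pow] at hgk
    have hkR : (0 : ℝ) < (k : ℝ) := by exact_mod_cast hk0
    nlinarith [hgk, hkR]
  -- nonvanishing
  have hΦ_inv : ∀ g : G, Φ g⁻¹ = -Φ g := by
    intro g
    have := hΦ_add g g⁻¹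
    rw [mul_inv_cancel, hΦ_one] at this
    linarith
  refine ⟨Φ, hΦ_add, ?_⟩
  intro g hg
  have hne : g • (0:ℝ) ≠ 0 := by
    have := hfree g hg 0
    simpa using this
  rcases lt_or_gt_of_ne hne with hlt | hgt
  · have hpos : 0 < g⁻¹ • (0:ℝ) := by
      have := hmono g⁻¹ hlt
      simp only [] at this
      rw [inv_smul_smul] at this
      linarith
    have := hΦ_pos g⁻¹ hpos
    rw [hΦ_inv] at this
    linarith
  · exact ne_of_gt (hΦ_pos g hgt)


/-- A group acting freely by orientation-preserving homeomorphisms on `ℝ` admits an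
Archimedean left-invariant linear order, embeds in `(ℝ, +)`, and is torsion-free
and abelian. -/
theorem stmt_2 (G : Type*) [Group G] [MulAction G ℝ]
    (hcont : ∀ g : G, Continuous fun x : ℝ => g • x)
    (hmono : ∀ g : G, StrictMono fun x : ℝ => g • x)
    (hfree : ∀ g : G, g ≠ 1 → ∀ x : ℝ, g • x ≠ x) :
    (∃ lt : G → G → Prop,
        (∀ a b : G, lt a b ∨ a = b ∨ lt b a) ∧
        (∀ a b : G, lt a b → ¬ lt b a) ∧
        (∀ a b c : G, lt a b → lt b c → lt a c) ∧
        (∀ a b c : G, lt b c → lt (a * b) (a * c)) ∧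
        (∀ g h : G, g ≠ 1 → ∃ n : ℤ, lt h (g ^ n))) ∧
    (∃ φ : G →* Multiplicative ℝ, Function.Injective φ) ∧
    (∀ g : G, ∀ n : ℕ, 0 < n → g ^ n = 1 → g = 1) ∧
    (∀ a b : G, a * b = b * a) := by
  by_cases htriv : ∀ g : G, g = 1
  · refine ⟨⟨fun _ _ => False, ?_, ?_, ?_, ?_, ?_⟩, ⟨1, ?_⟩, ?_, ?_⟩
    · exact fun a b => Or.inr (Or.inl ((htriv a).trans (htriv b).symm))
    · exact fun a b h => h.elim
    · exact fun a b c h => h.elim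
    · exact fun a b c h => h.elim
    · exact fun g h hg => absurd (htriv g) hg
    · exact fun a b _ => (htriv a).trans (htriv b).symm
    · exact fun g n hn _ => htriv g
    · exact fun a b => by rw [htriv a, htriv b]
  · push_neg at htriv
    obtain ⟨g₀, hg₀⟩ := htriv
    have hg₀0 : g₀ • (0:ℝ) ≠ 0 := by simpa using hfree g₀ hg₀ 0
    obtain ⟨f, hf⟩ : ∃ f : G, 0 < f • (0:ℝ) := by
      rcases lt_or_gt_of_ne hg₀0 with h | h
      · refine ⟨g₀⁻¹, ?_⟩
        have := hmono g₀⁻¹ h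
        simp only [] at this
        rw [inv_smul_smul] at this
        linarith
      · exact ⟨g₀, h⟩
    obtain ⟨Φ, hadd, hne⟩ := holder hcont hmono hfree f hf
    have hΦone : Φ 1 = 0 := by
      have := hadd 1 1
      rw [one_mul] at this
      linarith
    have hΦinv : ∀ g : G, Φ g⁻¹ = -Φ g := by
      intro g
      have := hadd g g⁻¹
      rw [mul_inv_cancel, hΦone] at this
      linarith
    have hinj : ∀ a b : G, Φ a = Φ b → a = b := by
      intro a b hab
      by_contra hne'
      have h1 : a * b⁻¹ ≠ 1 := by simpa [mul_inv_eq_one] using hne'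
      exact hne _ h1 (by rw [hadd, hΦinv, hab]; ring)
    refine ⟨⟨fun a b => a • (0:ℝ) < b • (0:ℝ), ?_, ?_, ?_, ?_, ?_⟩, ?_, ?_, ?_⟩
    · intro a b
      rcases lt_trichotomy (a • (0:ℝ)) (b • (0:ℝ)) with h | h | h
      · exact Or.inl h
      · exact Or.inr (Or.inl (dyn_inj hfree h))
      · exact Or.inr (Or.inr h)
    · exact fun a b h => lt_asymm h
    · exact fun a b c h1 h2 => lt_trans h1 h2
    · intro a b c h
      simpa [mul_smul] using hmono a h
    · intro g h hg
      have hg0 : g • (0:ℝ) ≠ 0 := by simpa using hfree g hg 0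
      rcases lt_or_gt_of_ne hg0 with hl | hr
      · have hpos : 0 < g⁻¹ • (0:ℝ) := by
          have := hmono g⁻¹ hl
          simp only [] at this
          rw [inv_smul_smul] at this
          linarith
        obtain ⟨n, hn⟩ := dyn_arch hcont hmono hfree hpos 0 (h • (0:ℝ))
        refine ⟨-(n : ℤ), ?_⟩
        have he : g ^ (-(n : ℤ)) = g⁻¹ ^ n := by
          rw [zpow_neg, zpow_natCast, ← inv_pow]
        rw [he]
        exact hn
      · obtain ⟨n, hn⟩ := dyn_arch hcont hmono hfree hr 0 (h • (0:ℝ))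
        exact ⟨(n : ℤ), by rw [zpow_natCast]; exact hn⟩
    · refine ⟨MonoidHom.mk' (fun g => Multiplicative.ofAdd (Φ g)) ?_, ?_⟩
      · intro a b
        show Multiplicative.ofAdd (Φ (a * b))
            = Multiplicative.ofAdd (Φ a) * Multiplicative.ofAdd (Φ b)
        rw [hadd]
        rfl
      · intro a b hab
        exact hinj a b (by simpa [Multiplicative.ofAdd] using hab)
    · intro g n hn hgn
      have hpow : ∀ m : ℕ, Φ (g ^ m) = m * Φ g := by
        intro m
        induction m with
        | zero => simpa using hΦone
        | succ k ih =>
          rw [pow_succ, hadd, ih]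
          push_cast
          ring
      have h0 : (n : ℝ) * Φ g = 0 := by
        rw [← hpow, hgn, hΦone]
      have hnR : (0:ℝ) < n := by exact_mod_cast hn
      have : Φ g = 0 := by
        rcases mul_eq_zero.mp h0 with h | h
        · exact absurd h (ne_of_gt hnR)
        · exact h
      exact hinj g 1 (by rw [this, hΦone])
    · intro a b
      apply hinj
      rw [hadd, hadd]
      ring
end

section
/- Let f : ℝ → ℝ be an orientation-preserving homeomorphism with f(x₀) > x₀ for some x₀. Let U = ⋃_{n ∈ ℤ} fⁿ([x₀, f(x₀)]). Then U is an open interval invariant under f, f acts freely on U, and every point of the frontier of U in ℝ is a fixed point of f. -/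
/-- If an orientation-preserving homeomorphism `f` of `ℝ` satisfies `f x₀ > x₀`,
then `U = ⋃_{n ∈ ℤ} fⁿ([x₀, f x₀])` is an open interval, invariant under `f`,
on which `f` acts freely, and every frontier point of `U` is fixed by `f`. -/
theorem stmt_5 (f : ℝ → ℝ) (hc : Continuous f) (hb : Function.Bijective f)
    (hm : StrictMono f) (x₀ : ℝ) (hx₀ : f x₀ > x₀) :
    ∀ U : Set ℝ,
      U = (⋃ n : ℤ, ⇑((Equiv.ofBijective f hb) ^ n) '' Set.Icc x₀ (f x₀)) →
      IsOpen U ∧ U.OrdConnected ∧ f '' U = U ∧ (∀ x ∈ U, f x ≠ x) ∧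
        ∀ x ∈ frontier U, f x = x := by
  intro U hU
  set e : Equiv.Perm ℝ := Equiv.ofBijective f hb with he
  set S : Set ℝ := Set.Icc x₀ (f x₀) with hS
  -- each integer power is strictly monotone
  have smN : ∀ k : ℕ, StrictMono ⇑(e ^ k) := by
    intro k
    induction k with
    | zero => simpa using strictMono_id
    | succ k ih =>
      have : (e ^ (k + 1) : Equiv.Perm ℝ) = e ^ k * e := pow_succ e k
      rw [this]
      exact fun a b hab => ih (hm hab)
  have sm : ∀ n : ℤ, StrictMono ⇑(e ^ n) := by
    intro n
    cases n with
    | ofNat k => rw [Int.ofNat_eq_coe, zpow_natCast]; exact smN k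
    | negSucc k =>
      rw [zpow_negSucc]
      intro a b hab
      have := (smN (k + 1)).lt_iff_lt (a := (e ^ (k+1))⁻¹ a) (b := (e ^ (k+1))⁻¹ b)
      rw [Equiv.Perm.inv_def, Equiv.apply_symm_apply, Equiv.apply_symm_apply] at this
      exact this.mp hab
  -- order isos for each power
  have surj : ∀ n : ℤ, Function.Surjective ⇑(e ^ n) := fun n => (e ^ n).surjective
  set ψ : ℤ → (ℝ ≃o ℝ) := fun n => StrictMono.orderIsoOfSurjective ⇑(e ^ n) (sm n) (surj n)
    with hψ
  have ψcoe : ∀ n : ℤ, ⇑(ψ n) = ⇑(e ^ n) := fun n => rfl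
  -- the sequence of endpoints
  set a : ℤ → ℝ := fun n => (e ^ n) x₀ with ha
  have hstep : ∀ n : ℤ, (e ^ n) (f x₀) = a (n + 1) := by
    intro n
    have : (e ^ (n + 1) : Equiv.Perm ℝ) = e ^ n * e := zpow_add_one e n
    simp only [ha, this, Equiv.Perm.coe_mul, Function.comp_apply]
    rfl
  have amono : StrictMono a := by
    refine strictMono_int_of_lt_succ (fun n => ?_)
    rw [← hstep n]
    exact sm n hx₀
  -- each piece is a closed interval
  have hIcc : ∀ n : ℤ, ⇑(e ^ n) '' S = Set.Icc (a n) (a (n + 1)) := by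
    intro n
    rw [← ψcoe n, hS, (ψ n).image_Icc]
    rw [ψcoe n, hstep n]
  have hUicc : U = ⋃ n : ℤ, Set.Icc (a n) (a (n + 1)) := by
    rw [hU]
    exact Set.iUnion_congr hIcc
  -- chains of intervals are contained in U
  have chain : ∀ p : ℕ, ∀ m : ℤ, Set.Icc (a m) (a (m + p)) ⊆ U := by
    intro p
    induction p with
    | zero =>
      intro m x hx
      simp only [Nat.cast_zero, add_zero, Set.Icc_self, Set.mem_singleton_iff] at hx
      rw [hUicc]
      exact Set.mem_iUnion.2 ⟨m, by rw [hx]; exact Set.left_mem_Icc.2 (amono (lt_add_one m)).le⟩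
    | succ p ih =>
      intro m x hx
      have h1 : a m ≤ a (m + p) := amono.monotone (by omega)
      have h2 : a (m + p) ≤ a (m + (p + 1 : ℕ)) := amono.monotone (by push_cast; omega)
      have : Set.Icc (a m) (a (m + (p + 1 : ℕ))) =
          Set.Icc (a m) (a (m + p)) ∪ Set.Icc (a (m + p)) (a (m + (p + 1 : ℕ))) :=
        (Set.Icc_union_Icc_eq_Icc h1 h2).symm
      rw [this] at hx
      rcases hx with hx | hx
      · exact ih m hx
      · have : a (m + (p + 1 : ℕ)) = a ((m + p) + 1) := by congr 1; push_cast; ring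
        rw [this] at hx
        rw [hUicc]
        exact Set.mem_iUnion.2 ⟨m + p, hx⟩
  -- openness
  have hopen : IsOpen U := by
    have hV : U = ⋃ n : ℤ, Set.Ioo (a n) (a (n + 3)) := by
      apply Set.Subset.antisymm
      · intro x hx
        rw [hUicc] at hx
        obtain ⟨n, hn⟩ := Set.mem_iUnion.1 hx
        refine Set.mem_iUnion.2 ⟨n - 1, ?_⟩
        constructor
        · exact lt_of_lt_of_le (amono (by omega)) hn.1
        · exact lt_of_le_of_lt hn.2 (amono (by omega))
      · intro x hx
        obtain ⟨n, hn⟩ := Set.mem_iUnion.1 hx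
        have : x ∈ Set.Icc (a n) (a (n + (3 : ℕ))) := by
          push_cast
          exact ⟨hn.1.le, hn.2.le⟩
        exact chain 3 n this
    rw [hV]
    exact isOpen_iUnion fun n => isOpen_Ioo
  -- ord-connectedness
  have hoc : U.OrdConnected := by
    constructor
    intro x hx y hy z hz
    rw [hUicc] at hx hy
    obtain ⟨n, hn⟩ := Set.mem_iUnion.1 hx
    obtain ⟨m, hmm⟩ := Set.mem_iUnion.1 hy
    have h1 : a n ≤ z := le_trans hn.1 hz.1
    have h2 : z ≤ a (m + 1) := le_trans hz.2 hmm.2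
    have hnm : n ≤ m + 1 := by
      by_contra h
      push_neg at h
      exact absurd (le_trans h1 h2) (not_le.2 (amono h))
    have : a (n + ((m + 1 - n).toNat : ℤ)) = a (m + 1) := by
      congr 1; omega
    exact chain (m + 1 - n).toNat n (by rw [this]; exact ⟨h1, h2⟩)
  -- invariance
  have himg : f '' U = U := by
    have hstepim : ∀ n : ℤ, f '' (⇑(e ^ n) '' S) = ⇑(e ^ (n + 1)) '' S := by
      intro n
      rw [← Set.image_comp]
      have hfun : f ∘ ⇑(e ^ n) = ⇑(e ^ (n + 1)) := by
        funext y
        show f ((e ^ n) y) = (e ^ (n + 1)) y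
        have : (e ^ (n + 1) : Equiv.Perm ℝ) = e * e ^ n := by
          rw [add_comm, zpow_add, zpow_one]
        rw [this]
        rfl
      rw [hfun]
    rw [hU, Set.image_iUnion]
    ext x
    simp only [Set.mem_iUnion]
    constructor
    · rintro ⟨n, hn⟩
      rw [hstepim n] at hn
      exact ⟨n + 1, hn⟩
    · rintro ⟨n, hn⟩
      refine ⟨n - 1, ?_⟩
      rw [hstepim (n - 1), sub_add_cancel]
      exact hn
  -- freeness
  have hfree : ∀ x ∈ U, f x ≠ x := by
    intro x hx hfx
    have hfix : Function.IsFixedPt ⇑e x := hfx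
    rw [hU] at hx
    obtain ⟨n, y, hy, hyx⟩ := Set.mem_iUnion.1 hx
    have hx' : (e ^ n) x = x := hfix.perm_zpow n
    have hyeq : y = x := (e ^ n).injective (by rw [hyx, hx'])
    rw [hyeq] at hy
    -- x ∈ [x₀, f x₀] and f x = x
    have h1 : f x₀ ≤ f x := hm.monotone hy.1
    rw [hfx] at h1
    have hxeq : x = f x₀ := le_antisymm hy.2 h1
    have : f (f x₀) = f x₀ := by rw [← hxeq, hfx, hxeq]
    have hlt : f x₀ < f (f x₀) := hm hx₀
    rw [this] at hlt
    exact lt_irrefl _ hlt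
  -- frontier points are fixed
  refine ⟨hopen, hoc, himg, hfree, ?_⟩
  intro x hx
  rw [hopen.frontier_eq] at hx
  obtain ⟨hxcl, hxU⟩ := hx
  set φ : ℝ ≃o ℝ := StrictMono.orderIsoOfSurjective f hm hb.2 with hφ
  have φcoe : ⇑φ = f := rfl
  -- x is an upper or a lower bound of U
  have hdich : (∀ u ∈ U, u ≤ x) ∨ (∀ u ∈ U, x ≤ u) := by
    by_contra h
    push_neg at h
    obtain ⟨⟨v, hv, hvx⟩, ⟨u, hu, hux⟩⟩ := h
    exact hxU (hoc.out hu hv ⟨hux.le, hvx.le⟩)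
  rcases hdich with hub | hlb
  · -- x = sup U
    have hlub : IsLUB U x := by
      refine ⟨hub, fun b hbb => ?_⟩
      by_contra h
      push_neg at h
      obtain ⟨u, hu1, hu2⟩ := mem_closure_iff_nhds.1 hxcl (Set.Ioi b) (Ioi_mem_nhds h)
      exact absurd (hbb hu2) (not_le.2 hu1)
    have hlub' : IsLUB U (f x) := by
      have := φ.isLUB_image'.2 hlub
      rwa [φcoe, himg] at this
    exact hlub'.unique hlub
  · -- x = inf U
    have hglb : IsGLB U x := by
      refine ⟨hlb, fun b hbb => ?_⟩
      by_contra h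
      push_neg at h
      obtain ⟨u, hu1, hu2⟩ := mem_closure_iff_nhds.1 hxcl (Set.Iio b) (Iio_mem_nhds h)
      exact absurd (hbb hu2) (not_le.2 hu1)
    have hglb' : IsGLB U (f x) := by
      have := φ.isGLB_image'.2 hglb
      rwa [φcoe, himg] at this
    exact hglb'.unique hglb
end
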